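/- The function λ(x) = [(1-x)·log(1-x) + (1+x)·log(1+x)]/x² is strictly increasing on (0,1). -/

import Mathlib

open Real Set

noncomputable def Lfun (x : ℝ) : ℝ := Real.log (1 + x) - Real.log (1 - x)
noncomputable def ffun (x : ℝ) : ℝ := (1 - x) * Real.log (1 - x) + (1 + x) * Real.log (1 + x)
noncomputable def hfun (x : ℝ) : ℝ := 2 * x / (1 - x^2) - Lfun x
noncomputable def gfun (x : ℝ) : ℝ := x * Lfun x - 2 * ffun x

lemma hasDerivAt_L {x : ℝ} (hx1 : -1 < x) (hx2 : x < 1) :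
    HasDerivAt Lfun (2 / (1 - x^2)) x := by
  have h1 : (0:ℝ) < 1 + x := by linarith
  have h2 : (0:ℝ) < 1 - x := by linarith
  have d1 : HasDerivAt (fun x : ℝ => Real.log (1 + x)) ((1 + x)⁻¹) x := by
    have hi : HasDerivAt (fun x : ℝ => 1 + x) 1 x := by
      simpa using (hasDerivAt_id x).const_add 1
    exact ((Real.hasDerivAt_log h1.ne').comp x hi).congr_deriv (by ring)
  have d2 : HasDerivAt (fun x : ℝ => Real.log (1 - x)) (-(1 - x)⁻¹) x := by
    have hi : HasDerivAt (fun x : ℝ => 1 - x) (-1) x := by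
      exact (hasDerivAt_id x).const_sub 1
    have := (Real.hasDerivAt_log h2.ne').comp x hi
    exact this.congr_deriv (by ring)
  have := d1.sub d2
  have h3 : (1 - x^2) ≠ 0 := by nlinarith
  have heq : (1 + x)⁻¹ - -(1 - x)⁻¹ = 2 / (1 - x^2) := by
    field_simp
    ring
  rw [heq] at this
  exact this

lemma hasDerivAt_f {x : ℝ} (hx1 : -1 < x) (hx2 : x < 1) :
    HasDerivAt ffun (Lfun x) x := by
  have h1 : (0:ℝ) < 1 + x := by linarith
  have h2 : (0:ℝ) < 1 - x := by linarith
  have dm : HasDerivAt (fun x : ℝ => 1 - x) (-1) x := by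
    exact (hasDerivAt_id x).const_sub 1
  have dp : HasDerivAt (fun x : ℝ => 1 + x) 1 x := by
    simpa using (hasDerivAt_id x).const_add 1
  have dl2 : HasDerivAt (fun x : ℝ => Real.log (1 - x)) (-(1 - x)⁻¹) x := by
    have := (Real.hasDerivAt_log h2.ne').comp x dm
    exact this.congr_deriv (by ring)
  have dl1 : HasDerivAt (fun x : ℝ => Real.log (1 + x)) ((1 + x)⁻¹) x := by
    exact ((Real.hasDerivAt_log h1.ne').comp x dp).congr_deriv (by ring)
  have t1 := dm.mul dl2
  have t2 := dp.mul dl1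
  have := t1.add t2
  have heq : -1 * Real.log (1 - x) + (1 - x) * -(1 - x)⁻¹ +
      (1 * Real.log (1 + x) + (1 + x) * (1 + x)⁻¹) = Lfun x := by
    rw [mul_inv_cancel₀ h1.ne', mul_neg, mul_inv_cancel₀ h2.ne']
    unfold Lfun; ring
  rw [heq] at this
  exact this

lemma hasDerivAt_h {x : ℝ} (hx1 : -1 < x) (hx2 : x < 1) :
    HasDerivAt hfun (4 * x^2 / (1 - x^2)^2) x := by
  have h3 : (1 - x^2) ≠ 0 := by nlinarith
  have dq : HasDerivAt (fun x : ℝ => 2 * x / (1 - x^2))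
      ((2 * (1 - x^2) - 2 * x * (-(2 * x))) / (1 - x^2)^2) x := by
    have dn : HasDerivAt (fun x : ℝ => 2 * x) 2 x := by
      simpa using (hasDerivAt_id x).const_mul 2
    have dd : HasDerivAt (fun x : ℝ => 1 - x^2) (-(2 * x)) x := by
      have : HasDerivAt (fun x : ℝ => x^2) (2 * x) x := by
        simpa using hasDerivAt_pow 2 x
      exact this.const_sub 1
    exact dn.div dd h3
  have := dq.sub (hasDerivAt_L hx1 hx2)
  have heq : (2 * (1 - x^2) - 2 * x * (-(2 * x))) / (1 - x^2)^2 - 2 / (1 - x^2)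
      = 4 * x^2 / (1 - x^2)^2 := by
    field_simp
    ring
  rw [heq] at this
  exact this

lemma hasDerivAt_g {x : ℝ} (hx1 : -1 < x) (hx2 : x < 1) :
    HasDerivAt gfun (hfun x) x := by
  have t1 := (hasDerivAt_id x).mul (hasDerivAt_L hx1 hx2)
  have t2 := (hasDerivAt_f hx1 hx2).const_mul 2
  have := t1.sub t2
  simp only [id_eq] at this
  have heq : 1 * Lfun x + x * (2 / (1 - x^2)) - 2 * Lfun x = hfun x := by
    unfold hfun
    ring
  rw [heq] at this
  exact this

lemma h_pos {x : ℝ} (hx1 : 0 < x) (hx2 : x < 1) : 0 < hfun x := by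
  have mono : StrictMonoOn hfun (Set.Ico 0 1) := by
    apply strictMonoOn_of_deriv_pos (convex_Ico 0 1)
    · intro y hy
      exact (hasDerivAt_h (by linarith [hy.1]) hy.2).continuousAt.continuousWithinAt
    · intro y hy
      rw [interior_Ico] at hy
      rw [(hasDerivAt_h (by linarith [hy.1]) hy.2).deriv]
      have h4 : (0:ℝ) < 1 - y^2 := by nlinarith [hy.1, hy.2]
      exact div_pos (by nlinarith [hy.1]) (by positivity)
  have h0 : hfun 0 = 0 := by simp [hfun, Lfun]
  have := mono (Set.mem_Ico.mpr ⟨le_refl 0, one_pos⟩)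
    (Set.mem_Ico.mpr ⟨hx1.le, hx2⟩) hx1
  linarith [this, h0.symm ▸ this]

lemma g_pos {x : ℝ} (hx1 : 0 < x) (hx2 : x < 1) : 0 < gfun x := by
  have mono : StrictMonoOn gfun (Set.Ico 0 1) := by
    apply strictMonoOn_of_deriv_pos (convex_Ico 0 1)
    · intro y hy
      exact (hasDerivAt_g (by linarith [hy.1]) hy.2).continuousAt.continuousWithinAt
    · intro y hy
      rw [interior_Ico] at hy
      rw [(hasDerivAt_g (by linarith [hy.1]) hy.2).deriv]
      exact h_pos hy.1 hy.2
  have h0 : gfun 0 = 0 := by simp [gfun, ffun, Lfun]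
  have := mono (Set.mem_Ico.mpr ⟨le_refl 0, one_pos⟩)
    (Set.mem_Ico.mpr ⟨hx1.le, hx2⟩) hx1
  linarith [this, h0.symm ▸ this]

theorem stmt2 :
    StrictMonoOn (fun x : ℝ => ((1 - x) * Real.log (1 - x) + (1 + x) * Real.log (1 + x)) / x^2)
      (Set.Ioo 0 1) := by
  have key : ∀ x ∈ Set.Ioo (0:ℝ) 1, HasDerivAt
      (fun x : ℝ => ((1 - x) * Real.log (1 - x) + (1 + x) * Real.log (1 + x)) / x^2)
      (x * gfun x / x^4) x := by
    intro x hx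
    obtain ⟨hx1, hx2⟩ := hx
    have hxne : x ≠ 0 := hx1.ne'
    have dden : HasDerivAt (fun x : ℝ => x^2) (2 * x) x := by
      simpa using hasDerivAt_pow 2 x
    have hden : x^2 ≠ 0 := pow_ne_zero 2 hxne
    have := (hasDerivAt_f (by linarith) hx2).div dden hden
    have heq : (Lfun x * x^2 - ffun x * (2 * x)) / (x^2)^2 = x * gfun x / x^4 := by
      unfold gfun
      field_simp
    rw [heq] at this
    exact this
  apply strictMonoOn_of_deriv_pos (convex_Ioo 0 1)
  · intro y hy
    exact (key y hy).continuousAt.continuousWithinAt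
  · intro y hy
    rw [interior_Ioo] at hy
    rw [(key y hy).deriv]
    have h1 := g_pos hy.1 hy.2
    have h2 : (0:ℝ) < y^4 := pow_pos hy.1 4
    exact div_pos (mul_pos hy.1 h1) h2
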